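/- Let n ≥ 1 and let Z ⊆ ℂⁿ be a closed set with Hausdorff dimension at most 2n − 2. If (φ_j) is a sequence of upper semicontinuous, locally bounded functions ℂⁿ → ℝ, each satisfying the circle sub-mean value inequality, and if for every compact C ⊆ ℂⁿ \ Z one has sup_j sup_C φ_j < ∞, then for every compact C' ⊆ ℂⁿ one has sup_j sup_{C'} φ_j < ∞. -/

import Mathlib

open MeasureTheory
open scoped ENNReal

/-- A function `φ : ℂⁿ → ℝ` satisfies the circle sub-mean value inequality if for all
`z, w ∈ ℂⁿ` one has `φ(z) ≤ (1/2π) ∫₀^{2π} φ(z + e^{iθ} w) dθ`. -/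
def CircleSubMean {n : ℕ} (φ : EuclideanSpace ℂ (Fin n) → ℝ) : Prop :=
  ∀ z w : EuclideanSpace ℂ (Fin n),
    φ z ≤ (1 / (2 * Real.pi)) *
      ∫ θ in (0 : ℝ)..(2 * Real.pi), φ (z + Complex.exp (θ * Complex.I) • w)

/-- A function is locally bounded if near every point it is bounded above and below. -/
def LocBounded {n : ℕ} (φ : EuclideanSpace ℂ (Fin n) → ℝ) : Prop :=
  ∀ x : EuclideanSpace ℂ (Fin n), ∃ s ∈ nhds x, BddAbove (φ '' s) ∧ BddBelow (φ '' s)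

open Module in
lemma exists_good_circle {m : ℕ} {Z : Set (EuclideanSpace ℂ (Fin (m+1)))}
    (hZ : dimH Z ≤ (2 * m : ℝ≥0∞)) (z : EuclideanSpace ℂ (Fin (m+1))) :
    ∃ w : EuclideanSpace ℂ (Fin (m+1)), ∀ θ : ℝ,
      z + Complex.exp (θ * Complex.I) • w ∉ Z := by
  classical
  let E := EuclideanSpace ℂ (Fin (m+1))
  let q : EuclideanSpace ℂ (Fin (m+1)) → ℝ × EuclideanSpace ℂ (Fin m) := fun w =>
    (‖w 0‖ ^ 2, (WithLp.toLp 2 (fun k : Fin m => (starRingEnd ℂ) (w 0) * w k.succ) : EuclideanSpace ℂ (Fin m)))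
  have h0 : ∀ i : Fin (m+1), ContDiff ℝ 1 (fun w : EuclideanSpace ℂ (Fin (m+1)) => w i) := fun i =>
    ((EuclideanSpace.proj (𝕜 := ℂ) i).contDiff).restrict_scalars ℝ
  have hq : ContDiff ℝ 1 q := by
    refine ContDiff.prodMk ?_ ?_
    · have : ContDiff ℝ 1 (fun x : ℂ => ‖x‖ ^ 2) := contDiff_norm_sq (𝕜 := ℂ) (E := ℂ)
      exact this.comp (h0 0)
    · refine (contDiff_piLp 2).2 fun k => ?_
      exact ((Complex.conjCLE.contDiff).comp (h0 0)).mul (h0 k.succ)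
  -- translate Z
  let Z' : Set (EuclideanSpace ℂ (Fin (m+1))) := (fun x => x - z) '' Z
  have hZ' : dimH Z' = dimH Z := by
    have hiso : Isometry (fun x : EuclideanSpace ℂ (Fin (m+1)) => x - z) :=
      Isometry.of_dist_eq fun a b => by simp [dist_sub_right]
    exact hiso.dimH_image Z
  have hfr : finrank ℝ (ℝ × EuclideanSpace ℂ (Fin m)) = 2 * m + 1 := by
    have h1 : finrank ℝ (EuclideanSpace ℂ (Fin m)) = 2 * m := by
      rw [← Module.finrank_mul_finrank ℝ ℂ (EuclideanSpace ℂ (Fin m)),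
        Complex.finrank_real_complex, finrank_euclideanSpace, Fintype.card_fin]
    rw [Module.finrank_prod, h1, Module.finrank_self]
    omega
  have hlt : dimH Z' < (finrank ℝ (ℝ × EuclideanSpace ℂ (Fin m)) : ℕ) := by
    rw [hZ', hfr]
    refine lt_of_le_of_lt hZ ?_
    push_cast
    exact ENNReal.lt_add_right (by finiteness) one_ne_zero
  have hdense : Dense ((q '' Z')ᶜ) :=
    hq.contDiffOn.dense_compl_image_of_dimH_lt_finrank convex_univ (Set.subset_univ Z') hlt
  obtain ⟨p, hp, hpball⟩ := hdense.exists_mem_open Metric.isOpen_ball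
      ⟨((1:ℝ), (0 : EuclideanSpace ℂ (Fin m))), Metric.mem_ball_self one_pos⟩
  have ht0 : 0 < p.1 := by
    have h1 : dist p.1 (1:ℝ) ≤ dist p ((1:ℝ), (0 : EuclideanSpace ℂ (Fin m))) := by
      rw [Prod.dist_eq]; exact le_max_left _ _
    have h2 : dist p.1 (1:ℝ) < 1 := lt_of_le_of_lt h1 (Metric.mem_ball.1 hpball)
    rw [Real.dist_eq, abs_lt] at h2
    linarith [h2.1]
  set r : ℝ := Real.sqrt p.1 with hr
  have hrpos : 0 < r := Real.sqrt_pos.2 ht0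
  have hrne : (r : ℂ) ≠ 0 := Complex.ofReal_ne_zero.2 hrpos.ne'
  let w : EuclideanSpace ℂ (Fin (m+1)) := WithLp.toLp 2 (Fin.cons (r : ℂ) (fun k => p.2 k / (r : ℂ)) : ∀ _ : Fin (m+1), ℂ)
  have hw0 : w 0 = (r : ℂ) := rfl
  have hwsucc : ∀ k : Fin m, w k.succ = p.2 k / (r : ℂ) := fun k => rfl
  have hqw : q w = p := by
    refine Prod.ext ?_ ?_
    · show ‖w 0‖ ^ 2 = p.1
      rw [hw0, Complex.norm_real, Real.norm_eq_abs, abs_of_nonneg (Real.sqrt_nonneg _)]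
      exact Real.sq_sqrt ht0.le
    · show (WithLp.toLp 2 (fun k : Fin m => (starRingEnd ℂ) (w 0) * w k.succ) : EuclideanSpace ℂ (Fin m)) = p.2
      ext k
      show (starRingEnd ℂ) (w 0) * w k.succ = p.2 k
      rw [hw0, hwsucc, Complex.conj_ofReal, mul_div_assoc', mul_div_cancel_left₀ _ hrne]
  refine ⟨w, fun θ hmem => ?_⟩
  set e : ℂ := Complex.exp (θ * Complex.I) with he
  have hnorm : ‖e‖ = 1 := Complex.norm_exp_ofReal_mul_I θ
  have hconj : (starRingEnd ℂ) e * e = 1 := by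
    rw [mul_comm, Complex.mul_conj, Complex.normSq_eq_norm_sq, hnorm]
    norm_num
  have hxZ' : e • w ∈ Z' := ⟨z + e • w, hmem, by show z + e • w - z = e • w; rw [add_sub_cancel_left]⟩
  have hqe : q (e • w) = q w := by
    refine Prod.ext ?_ ?_
    · show ‖(e • w) 0‖ ^ 2 = ‖w 0‖ ^ 2
      rw [PiLp.smul_apply, smul_eq_mul, norm_mul, hnorm, one_mul]
    · show (WithLp.toLp 2 (fun k : Fin m => (starRingEnd ℂ) ((e • w) 0) * (e • w) k.succ) : EuclideanSpace ℂ (Fin m))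
        = WithLp.toLp 2 (fun k : Fin m => (starRingEnd ℂ) (w 0) * w k.succ)
      ext k
      show (starRingEnd ℂ) ((e • w) 0) * (e • w) k.succ = (starRingEnd ℂ) (w 0) * w k.succ
      rw [PiLp.smul_apply, PiLp.smul_apply, smul_eq_mul, smul_eq_mul, map_mul]
      calc (starRingEnd ℂ) e * (starRingEnd ℂ) (w 0) * (e * w k.succ)
          = ((starRingEnd ℂ) e * e) * ((starRingEnd ℂ) (w 0) * w k.succ) := by ring
        _ = (starRingEnd ℂ) (w 0) * w k.succ := by rw [hconj, one_mul]
  exact hp ⟨e • w, hxZ', by rw [hqe, hqw]⟩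

lemma locBounded_exists_lb {n : ℕ} {φ : EuclideanSpace ℂ (Fin n) → ℝ} (h : LocBounded φ)
    {K : Set (EuclideanSpace ℂ (Fin n))} (hK : IsCompact K) :
    ∃ c : ℝ, ∀ x ∈ K, c ≤ φ x := by
  classical
  have h' : ∀ x : EuclideanSpace ℂ (Fin n), ∃ s, s ∈ nhds x ∧ ∃ c : ℝ, ∀ y ∈ s, c ≤ φ y := by
    intro x
    obtain ⟨s, hs, -, c, hc⟩ := h x
    exact ⟨s, hs, c, fun y hy => hc (Set.mem_image_of_mem _ hy)⟩
  choose s hs c hc using h'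
  obtain ⟨t, -, ht⟩ := hK.elim_nhds_subcover s (fun x _ => hs x)
  rcases t.eq_empty_or_nonempty with rfl | hne
  · exact ⟨0, fun x hx => absurd (ht hx) (by simp)⟩
  · refine ⟨t.inf' hne c, fun x hx => ?_⟩
    obtain ⟨y, hyt, hxy⟩ := Set.mem_iUnion₂.1 (ht hx)
    exact le_trans (Finset.inf'_le c hyt) (hc y x hxy)

-- main local-bound lemma
lemma local_bound {m : ℕ} {Z : Set (EuclideanSpace ℂ (Fin (m+1)))}
    (hZclosed : IsClosed Z)
    (φ : ℕ → EuclideanSpace ℂ (Fin (m+1)) → ℝ)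
    (husc : ∀ j, UpperSemicontinuous (φ j))
    (hloc : ∀ j, LocBounded (φ j))
    (hsub : ∀ j, CircleSubMean (φ j))
    (hbdd : ∀ C : Set (EuclideanSpace ℂ (Fin (m+1))), IsCompact C → C ⊆ Zᶜ →
      ∃ M : ℝ, ∀ j, ∀ z ∈ C, φ j z ≤ M)
    (z : EuclideanSpace ℂ (Fin (m+1)))
    (w : EuclideanSpace ℂ (Fin (m+1)))
    (hw : ∀ θ : ℝ, z + Complex.exp (θ * Complex.I) • w ∉ Z) :
    ∃ δ > 0, ∃ M : ℝ, ∀ j, ∀ z' ∈ Metric.ball z δ, φ j z' ≤ M := by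
  classical
  borelize (EuclideanSpace ℂ (Fin (m+1)))
  have h2π : (0:ℝ) ≤ 2 * Real.pi := by positivity
  have hgc : Continuous fun pr : (EuclideanSpace ℂ (Fin (m+1))) × ℝ =>
      pr.1 + Complex.exp ((pr.2 : ℂ) * Complex.I) • w :=
    continuous_fst.add ((Complex.continuous_exp.comp
      ((Complex.continuous_ofReal.comp continuous_snd).mul continuous_const)).smul
      continuous_const)
  have hcc : Continuous fun θ : ℝ => z + Complex.exp ((θ : ℂ) * Complex.I) • w :=
    hgc.comp (Continuous.prodMk continuous_const continuous_id)
  set S₀ : Set (EuclideanSpace ℂ (Fin (m+1))) :=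
    (fun θ : ℝ => z + Complex.exp ((θ : ℂ) * Complex.I) • w) '' Set.Icc 0 (2 * Real.pi) with hS₀
  have hS₀c : IsCompact S₀ := isCompact_Icc.image hcc
  have hS₀sub : S₀ ⊆ Zᶜ := by rintro _ ⟨θ, -, rfl⟩; exact hw θ
  obtain ⟨δ, δpos, hδ⟩ := hS₀c.exists_cthickening_subset_open hZclosed.isOpen_compl hS₀sub
  set K : Set (EuclideanSpace ℂ (Fin (m+1))) :=
    (fun pr : (EuclideanSpace ℂ (Fin (m+1))) × ℝ =>
      pr.1 + Complex.exp ((pr.2 : ℂ) * Complex.I) • w) ''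
      ((Metric.closedBall z δ) ×ˢ (Set.Icc 0 (2 * Real.pi))) with hK
  have hKc : IsCompact K := ((isCompact_closedBall z δ).prod isCompact_Icc).image hgc
  have hKsub : K ⊆ Zᶜ := by
    rintro _ ⟨⟨z', θ⟩, ⟨hz', hθ⟩, rfl⟩
    refine hδ (Metric.mem_cthickening_of_dist_le _
      (z + Complex.exp ((θ : ℂ) * Complex.I) • w) δ _ ⟨θ, hθ, rfl⟩ ?_)
    rw [dist_add_right]
    exact Metric.mem_closedBall.1 hz'
  obtain ⟨M, hM⟩ := hbdd K hKc hKsub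
  refine ⟨δ, δpos, M, fun j z' hz' => ?_⟩
  have hz'' : z' ∈ Metric.closedBall z δ := Metric.ball_subset_closedBall hz'
  obtain ⟨cj, hcj⟩ := locBounded_exists_lb (hloc j) hKc
  set f : ℝ → ℝ := fun θ => φ j (z' + Complex.exp ((θ : ℂ) * Complex.I) • w) with hf
  have hmemK : ∀ θ ∈ Set.Icc (0:ℝ) (2 * Real.pi),
      z' + Complex.exp ((θ : ℂ) * Complex.I) • w ∈ K :=
    fun θ hθ => ⟨(z', θ), ⟨hz'', hθ⟩, rfl⟩
  have hfm : Measurable f :=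
    (husc j).measurable.comp
      ((hgc.comp (Continuous.prodMk continuous_const continuous_id)).measurable)
  have hint : IntervalIntegrable f volume 0 (2 * Real.pi) := by
    rw [intervalIntegrable_iff]
    have hsub' : Set.uIoc (0:ℝ) (2 * Real.pi) ⊆ Set.Icc 0 (2 * Real.pi) := by
      rw [Set.uIoc_of_le h2π]; exact Set.Ioc_subset_Icc_self
    have hconst : IntegrableOn (fun _ : ℝ => max |M| |cj|) (Set.uIoc (0:ℝ) (2 * Real.pi)) := by
      refine integrableOn_const (ne_of_lt ?_)
      rw [Set.uIoc_of_le h2π, Real.volume_Ioc]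
      exact ENNReal.ofReal_lt_top
    refine Integrable.mono' hconst hfm.aestronglyMeasurable.restrict ?_
    filter_upwards [ae_restrict_mem measurableSet_uIoc] with θ hθ
    have hmem := hmemK θ (hsub' hθ)
    rw [Real.norm_eq_abs]
    refine abs_le.2 ⟨?_, ?_⟩
    · calc -(max |M| |cj|) ≤ -|cj| := neg_le_neg (le_max_right _ _)
        _ ≤ cj := neg_abs_le cj
        _ ≤ f θ := hcj _ hmem
    · exact (hM j _ hmem).trans ((le_abs_self M).trans (le_max_left _ _))
  have hconst' : IntervalIntegrable (fun _ : ℝ => M) volume 0 (2 * Real.pi) :=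
    intervalIntegrable_const
  have hmono : (∫ θ in (0:ℝ)..(2 * Real.pi), f θ) ≤ ∫ _ in (0:ℝ)..(2 * Real.pi), M :=
    intervalIntegral.integral_mono_on h2π hint hconst' (fun θ hθ => hM j _ (hmemK θ hθ))
  have hval : (∫ _ in (0:ℝ)..(2 * Real.pi), M) = (2 * Real.pi) * M := by
    rw [intervalIntegral.integral_const, smul_eq_mul, sub_zero]
  have hπ : (0:ℝ) < 1 / (2 * Real.pi) := by positivity
  have h1 : φ j z' ≤ (1 / (2 * Real.pi)) * ∫ θ in (0:ℝ)..(2 * Real.pi), f θ := hsub j z' w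
  have h2 : (1 / (2 * Real.pi)) * (∫ θ in (0:ℝ)..(2 * Real.pi), f θ)
      ≤ (1 / (2 * Real.pi)) * ((2 * Real.pi) * M) := by
    rw [← hval]
    exact mul_le_mul_of_nonneg_left hmono hπ.le
  have h3 : (1 / (2 * Real.pi)) * ((2 * Real.pi) * M) = M := by
    field_simp
  linarith

theorem stmt_3 (n : ℕ) (hn : 1 ≤ n) (Z : Set (EuclideanSpace ℂ (Fin n)))
    (hZclosed : IsClosed Z) (hZ : dimH Z ≤ (2 * n - 2 : ℝ≥0∞))
    (φ : ℕ → EuclideanSpace ℂ (Fin n) → ℝ)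
    (husc : ∀ j, UpperSemicontinuous (φ j))
    (hloc : ∀ j, LocBounded (φ j))
    (hsub : ∀ j, CircleSubMean (φ j))
    (hbdd : ∀ C : Set (EuclideanSpace ℂ (Fin n)), IsCompact C → C ⊆ Zᶜ →
      ∃ M : ℝ, ∀ j, ∀ z ∈ C, φ j z ≤ M) :
    ∀ C' : Set (EuclideanSpace ℂ (Fin n)), IsCompact C' →
      ∃ M : ℝ, ∀ j, ∀ z ∈ C', φ j z ≤ M := by
  intro C' hC'
  obtain ⟨m, rfl⟩ : ∃ m, n = m + 1 := ⟨n - 1, (Nat.succ_pred_eq_of_pos hn).symm⟩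
  have hZ2 : dimH Z ≤ (2 * m : ℝ≥0∞) := by
    refine le_trans hZ (le_of_eq ?_)
    push_cast
    rw [mul_add, mul_one, ENNReal.add_sub_cancel_right (by norm_num : (2:ℝ≥0∞) ≠ ⊤)]
  have key : ∀ z : EuclideanSpace ℂ (Fin (m+1)),
      ∃ δ > 0, ∃ M : ℝ, ∀ j, ∀ z' ∈ Metric.ball z δ, φ j z' ≤ M := fun z => by
    obtain ⟨w, hw⟩ := exists_good_circle hZ2 z
    exact local_bound hZclosed φ husc hloc hsub hbdd z w hw
  choose δ hδ M hM using key
  obtain ⟨t, ht⟩ := hC'.elim_finite_subcover (fun z => Metric.ball z (δ z))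
    (fun z => Metric.isOpen_ball)
    (fun x hx => Set.mem_iUnion.2 ⟨x, Metric.mem_ball_self (hδ x)⟩)
  rcases t.eq_empty_or_nonempty with rfl | hne
  · exact ⟨0, fun j x hx => absurd (ht hx) (by simp)⟩
  · refine ⟨t.sup' hne M, fun j x hx => ?_⟩
    obtain ⟨y, hyt, hxy⟩ := Set.mem_iUnion₂.1 (ht hx)
    exact (hM y j x hxy).trans (Finset.le_sup' M hyt)
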